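/- The monotone Hirsch conjecture holds for 2×n transportation polytopes with bound n: for every 2×n transportation polytope P(u,v) with positive margins, every cost matrix s ∈ ℝ^{2×n}, and every vertex O of P(u,v), there exist a vertex F of P(u,v) maximizing y ↦ ∑_{i,j} s_{ij} y_{ij} over P(u,v) and an edge walk O = y⁰, y¹, …, y^k = F with k ≤ n such that the values ∑_{i,j} s_{ij} y^l_{ij} are non-decreasing in l. -/

import Mathlib

/-- The m×n transportation polytope with margins u, v. -/
def TP (m n : ℕ) (u : Fin m → ℝ) (v : Fin n → ℝ) : Set (Matrix (Fin m) (Fin n) ℝ) :=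
  {y | (∀ i j, 0 ≤ y i j) ∧ (∀ i, ∑ j, y i j = u i) ∧ (∀ j, ∑ i, y i j = v j)}

/-- Two distinct vertices are adjacent if the segment between them is extreme in P. -/
def AdjVert (m n : ℕ) (u : Fin m → ℝ) (v : Fin n → ℝ)
    (y z : Matrix (Fin m) (Fin n) ℝ) : Prop :=
  y ≠ z ∧ y ∈ Set.extremePoints ℝ (TP m n u v) ∧ z ∈ Set.extremePoints ℝ (TP m n u v) ∧
    IsExtreme ℝ (TP m n u v) (segment ℝ y z)

namespace Stmt15

open Finset

variable {n : ℕ}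

/-- the slice-of-box polytope: first row of the transportation polytope -/
def Q (v : Fin n → ℝ) (u0 : ℝ) : Set (Fin n → ℝ) :=
  {d | (∀ j, 0 ≤ d j ∧ d j ≤ v j) ∧ ∑ j, d j = u0}

/-- at most one fractional coordinate -/
def OF (v : Fin n → ℝ) (d : Fin n → ℝ) : Prop :=
  ∀ j k, j ≠ k → 0 < d j → d j < v j → 0 < d k → d k < v k → False

/-- lift to a matrix -/
def M (v : Fin n → ℝ) (d : Fin n → ℝ) : Matrix (Fin 2) (Fin n) ℝ :=
  fun i j => if i = 0 then d j else v j - d j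

@[simp] lemma M_zero (v d : Fin n → ℝ) (j : Fin n) : M v d 0 j = d j := rfl

@[simp] lemma M_one (v d : Fin n → ℝ) (j : Fin n) : M v d 1 j = v j - d j := rfl

lemma M_inj (v : Fin n → ℝ) {d e : Fin n → ℝ} (h : M v d = M v e) : d = e := by
  funext j
  have := congrFun (congrFun h 0) j
  simpa using this

lemma mem_TP_iff (u : Fin 2 → ℝ) (v : Fin n → ℝ) (huv : ∑ i, u i = ∑ j, v j)
    (y : Matrix (Fin 2) (Fin n) ℝ) :
    y ∈ TP 2 n u v ↔ (fun j => y 0 j) ∈ Q v (u 0) ∧ y = M v (fun j => y 0 j) := by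
  rw [Fin.sum_univ_two] at huv
  constructor
  · rintro ⟨hpos, hrow, hcol⟩
    have hcol' : ∀ j, y 0 j + y 1 j = v j := by
      intro j; have := hcol j; rwa [Fin.sum_univ_two] at this
    have hy1 : ∀ j, y 1 j = v j - y 0 j := by intro j; linarith [hcol' j]
    refine ⟨⟨fun j => ⟨hpos 0 j, by linarith [hpos 1 j, hy1 j]⟩, hrow 0⟩, ?_⟩
    funext i j
    refine Fin.cases ?_ ?_ i
    · simp
    · intro k
      have hk : k = 0 := Subsingleton.elim k 0
      subst hk
      simp [hy1 j]
  · rintro ⟨⟨hbd, hsum⟩, hy⟩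
    rw [hy]
    refine ⟨?_, ?_, ?_⟩
    · intro i j
      refine Fin.cases ?_ ?_ i
      · simpa using (hbd j).1
      · intro k; have hk : k = 0 := Subsingleton.elim k 0; subst hk
        simp only [M]
        norm_num
        linarith [(hbd j).2]
    · intro i
      refine Fin.cases ?_ ?_ i
      · simpa using hsum
      · intro k; have hk : k = 0 := Subsingleton.elim k 0; subst hk
        have hs : ∑ j, y 0 j = u 0 := hsum
        simp only [M]
        norm_num [Finset.sum_sub_distrib]
        linarith
    · intro j
      rw [Fin.sum_univ_two]
      simp only [M]
      norm_num

lemma M_mem_TP (u : Fin 2 → ℝ) (v : Fin n → ℝ) (huv : ∑ i, u i = ∑ j, v j)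
    {d : Fin n → ℝ} (hd : d ∈ Q v (u 0)) : M v d ∈ TP 2 n u v := by
  rw [mem_TP_iff u v huv]
  exact ⟨hd, rfl⟩

lemma obj_M (s : Matrix (Fin 2) (Fin n) ℝ) (v d : Fin n → ℝ) :
    ∑ i, ∑ j, s i j * M v d i j
      = (∑ j, (s 0 j - s 1 j) * d j) + ∑ j, s 1 j * v j := by
  rw [Fin.sum_univ_two]
  simp only [M_zero, M_one]
  rw [← Finset.sum_add_distrib, ← Finset.sum_add_distrib]
  apply Finset.sum_congr rfl
  intro j _
  ring

lemma comb_eq_zero {a b p q : ℝ} (ha : 0 < a) (hb : 0 < b)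
    (hp : 0 ≤ p) (hq : 0 ≤ q) (h : a * p + b * q = 0) : p = 0 ∧ q = 0 := by
  constructor <;> nlinarith

lemma comb_eq_top {a b p q r : ℝ} (ha : 0 < a) (hb : 0 < b) (hab : a + b = 1)
    (hp : p ≤ r) (hq : q ≤ r) (h : a * p + b * q = r) : p = r ∧ q = r := by
  have h1 : a * p ≤ a * r := mul_le_mul_of_nonneg_left hp ha.le
  have h2 : b * q ≤ b * r := mul_le_mul_of_nonneg_left hq hb.le
  have hr : a * r + b * r = r := by rw [← add_mul, hab, one_mul]
  have e1 : a * p = a * r := by linarith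
  have e2 : b * q = b * r := by linarith
  exact ⟨mul_left_cancel₀ ha.ne' e1, mul_left_cancel₀ hb.ne' e2⟩

/-- central helper for extremality arguments: if a point of Q is a positive combination
of two points of Q, then the two points agree with it at every at-bound coordinate. -/
lemma comb_bound {v : Fin n → ℝ} {u0 : ℝ} {d e1 e2 : Fin n → ℝ}
    (hd : d ∈ Q v u0) (he1 : e1 ∈ Q v u0) (he2 : e2 ∈ Q v u0)
    {a b : ℝ} (ha : 0 < a) (hb : 0 < b) (hab : a + b = 1)
    (hcomb : ∀ j, a * e1 j + b * e2 j = d j) {j : Fin n}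
    (hbd : d j = 0 ∨ d j = v j) : e1 j = d j ∧ e2 j = d j := by
  rcases hbd with h0 | hv
  · have := comb_eq_zero ha hb (he1.1 j).1 (he2.1 j).1 (by rw [hcomb j, h0])
    rw [h0]; exact this
  · have := comb_eq_top ha hb hab (he1.1 j).2 (he2.1 j).2 (by rw [hcomb j, hv])
    rw [hv]; exact this

/-- if a point of Q is a positive combination of e1 e2 ∈ Q and has at most one
fractional coordinate, then e1 = d (and e2 = d). -/
lemma comb_eq_of_OF {v : Fin n → ℝ} {u0 : ℝ} {d e1 e2 : Fin n → ℝ}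
    (hOF : OF v d)
    (hd : d ∈ Q v u0) (he1 : e1 ∈ Q v u0) (he2 : e2 ∈ Q v u0)
    {a b : ℝ} (ha : 0 < a) (hb : 0 < b) (hab : a + b = 1)
    (hcomb : ∀ j, a * e1 j + b * e2 j = d j) : e1 = d ∧ e2 = d := by
  have key : ∀ j, (d j = 0 ∨ d j = v j) → e1 j = d j ∧ e2 j = d j :=
    fun j h => comb_bound hd he1 he2 ha hb hab hcomb h
  by_cases hall : ∀ j, d j = 0 ∨ d j = v j
  · exact ⟨funext fun j => (key j (hall j)).1, funext fun j => (key j (hall j)).2⟩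
  · push_neg at hall
    obtain ⟨j0, hj0⟩ := hall
    have hfrac : 0 < d j0 ∧ d j0 < v j0 := by
      rcases (hd.1 j0) with ⟨h1, h2⟩
      constructor
      · rcases lt_or_eq_of_le h1 with h | h
        · exact h
        · exact absurd h.symm (fun hh => hj0.1 hh)
      · rcases lt_or_eq_of_le h2 with h | h
        · exact h
        · exact absurd h (fun hh => hj0.2 hh)
    have hoth : ∀ j, j ≠ j0 → (d j = 0 ∨ d j = v j) := by
      intro j hj
      by_contra hcon
      push_neg at hcon
      have hfj : 0 < d j ∧ d j < v j := by
        rcases (hd.1 j) with ⟨h1, h2⟩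
        constructor
        · rcases lt_or_eq_of_le h1 with h | h
          · exact h
          · exact absurd h.symm hcon.1
        · rcases lt_or_eq_of_le h2 with h | h
          · exact h
          · exact absurd h hcon.2
      exact hOF j j0 hj hfj.1 hfj.2 hfrac.1 hfrac.2
    have hoth1 : ∀ j, j ≠ j0 → e1 j = d j ∧ e2 j = d j :=
      fun j hj => key j (hoth j hj)
    -- sums force the j0 coordinate
    have hs1 : ∑ l ∈ univ.erase j0, e1 l = ∑ l ∈ univ.erase j0, d l :=
      Finset.sum_congr rfl (fun l hl => (hoth1 l (Finset.ne_of_mem_erase hl)).1)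
    have hs2 : ∑ l ∈ univ.erase j0, e2 l = ∑ l ∈ univ.erase j0, d l :=
      Finset.sum_congr rfl (fun l hl => (hoth1 l (Finset.ne_of_mem_erase hl)).2)
    have t1 : ∑ l ∈ univ.erase j0, e1 l + e1 j0 = u0 := by
      rw [Finset.sum_erase_add univ e1 (mem_univ j0)]; exact he1.2
    have t2 : ∑ l ∈ univ.erase j0, e2 l + e2 j0 = u0 := by
      rw [Finset.sum_erase_add univ e2 (mem_univ j0)]; exact he2.2
    have td : ∑ l ∈ univ.erase j0, d l + d j0 = u0 := by
      rw [Finset.sum_erase_add univ d (mem_univ j0)]; exact hd.2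
    have e1j0 : e1 j0 = d j0 := by rw [hs1] at t1; linarith
    have e2j0 : e2 j0 = d j0 := by rw [hs2] at t2; linarith
    constructor <;> funext j <;> by_cases hj : j = j0
    · rw [hj]; exact e1j0
    · exact (hoth1 j hj).1
    · rw [hj]; exact e2j0
    · exact (hoth1 j hj).2

lemma perturb_mem_Q {v : Fin n → ℝ} {u0 : ℝ} {d : Fin n → ℝ} (hd : d ∈ Q v u0)
    {j k : Fin n} (hjk : j ≠ k) {ε : ℝ} (h1 : 0 ≤ ε)
    (h2 : d j + ε ≤ v j) (h3 : ε ≤ d k) :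
    (fun l => (d l + if l = j then ε else 0) - if l = k then ε else 0) ∈ Q v u0 := by
  constructor
  · intro l
    by_cases hlj : l = j
    · subst hlj
      simp only [eq_self_iff_true, if_true, if_neg hjk]
      exact ⟨by linarith [(hd.1 l).1], by linarith⟩
    · by_cases hlk : l = k
      · subst hlk
        simp only [if_neg hlj, eq_self_iff_true, if_true]
        exact ⟨by linarith, by linarith [(hd.1 l).2]⟩
      · simp only [if_neg hlj, if_neg hlk]
        exact ⟨by linarith [(hd.1 l).1], by linarith [(hd.1 l).2]⟩
  · rw [Finset.sum_sub_distrib, Finset.sum_add_distrib]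
    rw [Finset.sum_ite_eq' univ j (fun _ => ε), Finset.sum_ite_eq' univ k (fun _ => ε)]
    simp [hd.2]

lemma extreme_iff (u : Fin 2 → ℝ) (v : Fin n → ℝ)
    (huv : ∑ i, u i = ∑ j, v j) (y : Matrix (Fin 2) (Fin n) ℝ) :
    y ∈ Set.extremePoints ℝ (TP 2 n u v) ↔
      y ∈ TP 2 n u v ∧ OF v (fun j => y 0 j) := by
  constructor
  · rintro ⟨hyS, hext⟩
    refine ⟨hyS, ?_⟩
    intro j k hjk h1 h2 h3 h4
    obtain ⟨hd, hy⟩ := (mem_TP_iff u v huv y).1 hyS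
    set d : Fin n → ℝ := fun j => y 0 j with hdd
    set ε : ℝ := min (min (d j) (v j - d j)) (min (d k) (v k - d k)) with hε
    have hεpos : 0 < ε :=
      lt_min (lt_min h1 (by linarith)) (lt_min h3 (by linarith))
    have hε1 : ε ≤ d j := le_trans (min_le_left _ _) (min_le_left _ _)
    have hε2 : ε ≤ v j - d j := le_trans (min_le_left _ _) (min_le_right _ _)
    have hε3 : ε ≤ d k := le_trans (min_le_right _ _) (min_le_left _ _)
    have hε4 : ε ≤ v k - d k := le_trans (min_le_right _ _) (min_le_right _ _)
    set d1 : Fin n → ℝ :=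
      fun l => (d l + if l = j then ε else 0) - if l = k then ε else 0 with hd1
    set d2 : Fin n → ℝ :=
      fun l => (d l + if l = k then ε else 0) - if l = j then ε else 0 with hd2
    have hbd1 : d1 ∈ Q v (u 0) := perturb_mem_Q hd hjk hεpos.le (by linarith) hε3
    have hbd2 : d2 ∈ Q v (u 0) := perturb_mem_Q hd hjk.symm hεpos.le (by linarith) hε1
    have hmid : y ∈ openSegment ℝ (M v d1) (M v d2) := by
      refine ⟨1/2, 1/2, by norm_num, by norm_num, by norm_num, ?_⟩
      funext i l
      have hyil : y i l = M v d i l := by rw [← hy]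
      rw [Matrix.add_apply, Matrix.smul_apply, Matrix.smul_apply, smul_eq_mul, smul_eq_mul,
        hyil]
      by_cases hi : i = 0
      · subst hi; simp only [M_zero, hd1, hd2]; ring
      · have hi1 : i = 1 := by omega
        subst hi1; simp only [M_one, hd1, hd2]; ring
    have hh := hext (M_mem_TP u v huv hbd1) (M_mem_TP u v huv hbd2) hmid
    have hd1d : d1 = d := M_inj v (by rw [hh, hy])
    have : d1 j = d j := by rw [hd1d]
    simp only [hd1, eq_self_iff_true, if_true, if_neg hjk] at this
    linarith
  · rintro ⟨hyS, hOF⟩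
    refine ⟨hyS, ?_⟩
    intro x1 hx1 x2 hx2 hseg
    obtain ⟨hd, hy⟩ := (mem_TP_iff u v huv y).1 hyS
    obtain ⟨he1, hx1e⟩ := (mem_TP_iff u v huv x1).1 hx1
    obtain ⟨he2, hx2e⟩ := (mem_TP_iff u v huv x2).1 hx2
    obtain ⟨a, b, ha, hb, hab, hsum⟩ := hseg
    have hcomb : ∀ j, a * (fun j => x1 0 j) j + b * (fun j => x2 0 j) j
        = (fun j => y 0 j) j := by
      intro j
      have := congrFun (congrFun hsum 0) j
      simpa using this
    obtain ⟨hh1, hh2⟩ := comb_eq_of_OF hOF hd he1 he2 ha hb hab hcomb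
    rw [hx1e, hh1, ← hy]



lemma comb_mem_Q {v : Fin n → ℝ} {u0 : ℝ} {d d' : Fin n → ℝ}
    (hd : d ∈ Q v u0) (hd' : d' ∈ Q v u0) {α β : ℝ}
    (hα : 0 ≤ α) (hβ : 0 ≤ β) (hαβ : α + β = 1) :
    (fun j => α * d j + β * d' j) ∈ Q v u0 := by
  constructor
  · intro j
    have h1 := mul_le_mul_of_nonneg_left (hd.1 j).2 hα
    have h2 := mul_le_mul_of_nonneg_left (hd'.1 j).2 hβ
    have h3 : α * v j + β * v j = v j := by rw [← add_mul, hαβ, one_mul]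
    refine ⟨add_nonneg (mul_nonneg hα (hd.1 j).1) (mul_nonneg hβ (hd'.1 j).1), ?_⟩
    show α * d j + β * d' j ≤ v j
    linarith
  · simp only
    rw [Finset.sum_add_distrib, ← Finset.mul_sum, ← Finset.mul_sum, hd.2, hd'.2,
      ← add_mul, hαβ, one_mul]

lemma Mcomb (v : Fin n → ℝ) (d d' : Fin n → ℝ) {α β : ℝ} (h : α + β = 1) :
    α • M v d + β • M v d' = M v (fun j => α * d j + β * d' j) := by
  funext i l
  rw [Matrix.add_apply, Matrix.smul_apply, Matrix.smul_apply, smul_eq_mul, smul_eq_mul]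
  by_cases hi : i = 0
  · subst hi; simp only [M_zero]
  · have hi1 : i = 1 := by omega
    subst hi1; simp only [M_one]
    linear_combination v l * h

lemma pair_sum {v : Fin n → ℝ} {u0 : ℝ} {d e : Fin n → ℝ}
    (hd : d ∈ Q v u0) (he : e ∈ Q v u0) {a b : Fin n} (hab : a ≠ b)
    (hoff : ∀ j, j ≠ a → j ≠ b → e j = d j) :
    e a + e b = d a + d b := by
  have key : ∀ (g : Fin n → ℝ),
      ∑ j, g j = ∑ j ∈ (univ.erase a).erase b, g j + g b + g a := by
    intro g
    rw [Finset.sum_erase_add (univ.erase a) g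
      (Finset.mem_erase.2 ⟨Ne.symm hab, mem_univ b⟩), Finset.sum_erase_add univ g (mem_univ a)]
  have h1 := key d
  have h2 := key e
  have h3 : ∑ j ∈ (univ.erase a).erase b, e j = ∑ j ∈ (univ.erase a).erase b, d j := by
    apply Finset.sum_congr rfl
    intro j hj
    have hjb := (Finset.mem_erase.1 hj).1
    have hja := (Finset.mem_erase.1 (Finset.mem_erase.1 hj).2).1
    exact hoff j hja hjb
  rw [hd.2] at h1
  rw [he.2] at h2
  rw [h3] at h2
  linarith

lemma bound_or_frac {v : Fin n → ℝ} {u0 : ℝ} {d : Fin n → ℝ} (hd : d ∈ Q v u0) (j : Fin n) :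
    d j = 0 ∨ d j = v j ∨ (0 < d j ∧ d j < v j) := by
  rcases lt_or_eq_of_le (hd.1 j).1 with h1 | h1
  · rcases lt_or_eq_of_le (hd.1 j).2 with h2 | h2
    · exact Or.inr (Or.inr ⟨h1, h2⟩)
    · exact Or.inr (Or.inl h2)
  · exact Or.inl h1.symm

/-- any point of Q agreeing with d off {a,b} lies between two adjacent vertices d, d' -/
lemma seg_mem_aux {v : Fin n → ℝ} {u0 : ℝ} {d d' : Fin n → ℝ}
    (hd : d ∈ Q v u0) (hd' : d' ∈ Q v u0) (hOF : OF v d) (hOF' : OF v d')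
    {a b : Fin n} (hab : a ≠ b)
    (hoff : ∀ j, j ≠ a → j ≠ b → d' j = d j ∧ (d j = 0 ∨ d j = v j))
    (hlt : d a < d' a) {e : Fin n → ℝ} (he : e ∈ Q v u0)
    (hoffe : ∀ j, j ≠ a → j ≠ b → e j = d j) :
    ∃ γ δ : ℝ, 0 ≤ γ ∧ 0 ≤ δ ∧ γ + δ = 1 ∧ e = fun j => γ * d j + δ * d' j := by
  have hps := pair_sum hd hd' hab (fun j hja hjb => (hoff j hja hjb).1)
  have hpse := pair_sum hd he hab hoffe
  -- lower bound
  have hlow : d a ≤ e a := by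
    rcases bound_or_frac hd a with h | h | h
    · rw [h]; exact (he.1 a).1
    · exfalso; linarith [(hd'.1 a).2]
    · -- d a fractional, so d b is at a bound
      rcases bound_or_frac hd b with hb0 | hbv | hbf
      · exfalso
        have := (hd'.1 b).1
        linarith
      · have := (he.1 b).2
        linarith [hbv]
      · exact (hOF a b hab h.1 h.2 hbf.1 hbf.2).elim
  have hhigh : e a ≤ d' a := by
    rcases bound_or_frac hd' a with h | h | h
    · exfalso; linarith [(hd.1 a).1]
    · rw [h]; exact (he.1 a).2
    · rcases bound_or_frac hd' b with hb0 | hbv | hbf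
      · have := (he.1 b).1
        linarith
      · exfalso
        have := (hd.1 b).2
        linarith
      · exact (hOF' a b hab h.1 h.2 hbf.1 hbf.2).elim
  have hne : d' a - d a > 0 := by linarith
  set δ : ℝ := (e a - d a) / (d' a - d a) with hδ
  refine ⟨1 - δ, δ, ?_, ?_, by ring, ?_⟩
  · have : δ ≤ 1 := by
      rw [hδ, div_le_one hne]; linarith
    linarith
  · exact div_nonneg (by linarith) hne.le
  · have hδa : δ * (d' a - d a) = e a - d a := by
      rw [hδ, div_mul_cancel₀]; exact hne.ne'
    funext j
    by_cases hja : j = a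
    · subst hja; nlinarith [hδa]
    · by_cases hjb : j = b
      · subst hjb; nlinarith [hδa]
      · have h1 : e j = d j := hoffe j hja hjb
        have h2 : d' j = d j := (hoff j hja hjb).1
        rw [h1, h2]; ring

lemma adj_lemma (u : Fin 2 → ℝ) (v : Fin n → ℝ) (huv : ∑ i, u i = ∑ j, v j)
    {d d' : Fin n → ℝ} (hd : d ∈ Q v (u 0)) (hd' : d' ∈ Q v (u 0))
    (hOF : OF v d) (hOF' : OF v d') {a b : Fin n} (hab : a ≠ b)
    (hoff : ∀ j, j ≠ a → j ≠ b → d' j = d j ∧ (d j = 0 ∨ d j = v j))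
    (hne : d ≠ d') : AdjVert 2 n u v (M v d) (M v d') := by
  have hoff' : ∀ j, j ≠ a → j ≠ b → d j = d' j ∧ (d' j = 0 ∨ d' j = v j) := by
    intro j hja hjb
    obtain ⟨h1, h2⟩ := hoff j hja hjb
    exact ⟨h1.symm, by rw [h1]; exact h2⟩
  have hsub : segment ℝ (M v d) (M v d') ⊆ TP 2 n u v := by
    rintro x ⟨α, β, hα, hβ, hαβ, rfl⟩
    rw [Mcomb v d d' hαβ]
    exact M_mem_TP u v huv (comb_mem_Q hd hd' hα hβ hαβ)
  -- main part: any e ∈ Q agreeing with d off {a,b} gives a point of the segment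
  have hmain : ∀ e : Fin n → ℝ, e ∈ Q v (u 0) → (∀ j, j ≠ a → j ≠ b → e j = d j) →
      M v e ∈ segment ℝ (M v d) (M v d') := by
    intro e he hoffe
    rcases lt_trichotomy (d a) (d' a) with hlt | heq | hgt
    · obtain ⟨γ, δ, hγ, hδ, hγδ, hee⟩ := seg_mem_aux hd hd' hOF hOF' hab hoff hlt he hoffe
      exact ⟨γ, δ, hγ, hδ, hγδ, by rw [Mcomb v d d' hγδ, ← hee]⟩
    · exfalso
      apply hne
      funext j
      by_cases hja : j = a
      · subst hja; exact heq
      · by_cases hjb : j = b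
        · subst hjb
          have := pair_sum hd hd' hab (fun j hja hjb => (hoff j hja hjb).1)
          linarith
        · exact ((hoff j hja hjb).1).symm
    · have hoffe' : ∀ j, j ≠ a → j ≠ b → e j = d' j := by
        intro j hja hjb
        rw [hoffe j hja hjb]; exact (hoff' j hja hjb).1
      obtain ⟨γ, δ, hγ, hδ, hγδ, hee⟩ :=
        seg_mem_aux hd' hd hOF' hOF hab hoff' hgt he hoffe'
      rw [segment_symm]
      exact ⟨γ, δ, hγ, hδ, hγδ, by rw [Mcomb v d' d hγδ, ← hee]⟩
  refine ⟨fun h => hne (M_inj v h), ?_, ?_, ?_⟩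
  · exact (extreme_iff u v huv (M v d)).2 ⟨M_mem_TP u v huv hd, hOF⟩
  · exact (extreme_iff u v huv (M v d')).2 ⟨M_mem_TP u v huv hd', hOF'⟩
  · constructor
    · exact hsub
    · intro x1 hx1 x2 hx2 x hxseg hxopen
      obtain ⟨he1, hx1e⟩ := (mem_TP_iff u v huv x1).1 hx1
      obtain ⟨he2, hx2e⟩ := (mem_TP_iff u v huv x2).1 hx2
      have hxTP := hsub hxseg
      obtain ⟨hex, hxe⟩ := (mem_TP_iff u v huv x).1 hxTP
      obtain ⟨a', b', ha', hb', hab', hsum'⟩ := hxopen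
      have hcomb : ∀ j, a' * (fun j => x1 0 j) j + b' * (fun j => x2 0 j) j
          = (fun j => x 0 j) j := by
        intro j
        have := congrFun (congrFun hsum' 0) j
        simpa using this
      -- off-pair coordinates of x are at the bounds of d
      have hxoff : ∀ j, j ≠ a → j ≠ b → x 0 j = d j := by
        intro j hja hjb
        obtain ⟨α, β, hα, hβ, hαβ, hxx⟩ := hxseg
        have := congrFun (congrFun hxx 0) j
        simp only [Matrix.add_apply, Matrix.smul_apply, M_zero, smul_eq_mul] at this
        rw [← this, (hoff j hja hjb).1]
        rw [← add_mul, hαβ, one_mul]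
      have hoffe1 : ∀ j, j ≠ a → j ≠ b → (fun j => x1 0 j) j = d j ∧ (fun j => x2 0 j) j = d j := by
        intro j hja hjb
        have hbd : x 0 j = 0 ∨ x 0 j = v j := by
          rw [hxoff j hja hjb]; exact (hoff j hja hjb).2
        have := comb_bound hex he1 he2 ha' hb' hab' (fun j => hcomb j) (j := j) hbd
        rw [hxoff j hja hjb] at this
        exact ⟨this.1, this.2⟩
      rw [hx1e]
      exact hmain _ he1 (fun j hja hjb => (hoffe1 j hja hjb).1)

lemma gpert (c : Fin n → ℝ) (m : Fin n → ℝ) {j k : Fin n} (hjk : j ≠ k) (t : ℝ) :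
    ∑ l, c l * ((m l + if l = j then t else 0) - if l = k then t else 0)
      = (∑ l, c l * m l) + c j * t - c k * t := by
  have h : ∀ l, c l * ((m l + if l = j then t else 0) - if l = k then t else 0)
      = c l * m l + (if l = j then c j * t else 0) - (if l = k then c k * t else 0) := by
    intro l
    by_cases hlj : l = j
    · subst hlj
      simp only [eq_self_iff_true, if_true, if_neg hjk]
      ring
    · by_cases hlk : l = k
      · subst hlk
        simp only [if_neg hlj, eq_self_iff_true, if_true]
        ring
      · simp only [if_neg hlj, if_neg hlk]
        ring
  rw [Finset.sum_congr rfl (fun l _ => h l), Finset.sum_sub_distrib, Finset.sum_add_distrib,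
    Finset.sum_ite_eq' univ j (fun _ => c j * t), Finset.sum_ite_eq' univ k (fun _ => c k * t)]
  simp

lemma Q_nonempty (v : Fin n → ℝ) (hv : ∀ j, 0 < v j) {u0 : ℝ}
    (h0 : 0 ≤ u0) (h1 : u0 ≤ ∑ j, v j) (hS : 0 < ∑ j, v j) :
    (Q v u0).Nonempty := by
  refine ⟨fun j => (u0 / ∑ j, v j) * v j, ⟨?_, ?_⟩⟩
  · intro j
    constructor
    · exact mul_nonneg (div_nonneg h0 hS.le) (hv j).le
    · have : u0 / ∑ j, v j ≤ 1 := by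
        rw [div_le_one hS]; exact h1
      nlinarith [hv j]
  · rw [← Finset.mul_sum, div_mul_cancel₀ _ hS.ne']

lemma Q_isCompact (v : Fin n → ℝ) (u0 : ℝ) : IsCompact (Q v u0) := by
  have hsub : Q v u0 ⊆ Set.pi Set.univ (fun j => Set.Icc 0 (v j)) := by
    intro d hd
    rw [Set.mem_univ_pi]
    exact fun j => ⟨(hd.1 j).1, (hd.1 j).2⟩
  have hclosed : IsClosed (Q v u0) := by
    have : Q v u0 = (⋂ j, {d : Fin n → ℝ | 0 ≤ d j} ∩ {d | d j ≤ v j})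
        ∩ {d | ∑ j, d j = u0} := by
      ext d
      simp only [Q, Set.mem_setOf_eq, Set.mem_inter_iff, Set.mem_iInter]
    rw [this]
    refine IsClosed.inter (isClosed_iInter fun j => IsClosed.inter ?_ ?_) ?_
    · exact isClosed_le continuous_const (continuous_apply j)
    · exact isClosed_le (continuous_apply j) continuous_const
    · exact isClosed_eq (continuous_finset_sum _ fun j _ => continuous_apply j)
        continuous_const
  exact IsCompact.of_isClosed_subset (isCompact_univ_pi fun j => isCompact_Icc) hclosed hsub

lemma frac_reduce (v : Fin n → ℝ) (u0 : ℝ) (c : Fin n → ℝ) :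
    ∀ (k : ℕ) (m : Fin n → ℝ), m ∈ Q v u0 → (∀ e ∈ Q v u0, ∑ j, c j * e j ≤ ∑ j, c j * m j) →
    (univ.filter (fun j => 0 < m j ∧ m j < v j)).card ≤ k →
    ∃ f ∈ Q v u0, OF v f ∧ ∀ e ∈ Q v u0, ∑ j, c j * e j ≤ ∑ j, c j * f j := by
  classical
  intro k
  induction k with
  | zero =>
    intro m hm hopt hcard
    refine ⟨m, hm, ?_, hopt⟩
    intro j k hjk h1 h2 h3 h4
    have : j ∈ univ.filter (fun j => 0 < m j ∧ m j < v j) := by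
      simp [h1, h2]
    have hc := Finset.card_eq_zero.1 (Nat.le_zero.1 hcard)
    rw [hc] at this
    exact absurd this (Finset.notMem_empty j)
  | succ k ih =>
    intro m hm hopt hcard
    by_cases hOFm : OF v m
    · exact ⟨m, hm, hOFm, hopt⟩
    · simp only [OF, not_forall] at hOFm
      obtain ⟨j, k', hjk, h1, h2, h3, h4, -⟩ := hOFm
      -- c j = c k'
      have hceq : c j = c k' := by
        set t : ℝ := min (min (m j) (v j - m j)) (min (m k') (v k' - m k')) with ht
        have htpos : 0 < t := lt_min (lt_min h1 (by linarith)) (lt_min h3 (by linarith))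
        have ht1 : t ≤ m j := le_trans (min_le_left _ _) (min_le_left _ _)
        have ht2 : t ≤ v j - m j := le_trans (min_le_left _ _) (min_le_right _ _)
        have ht3 : t ≤ m k' := le_trans (min_le_right _ _) (min_le_left _ _)
        have ht4 : t ≤ v k' - m k' := le_trans (min_le_right _ _) (min_le_right _ _)
        have hp1 := hopt _ (perturb_mem_Q hm hjk htpos.le (by linarith) ht3)
        have hp2 := hopt _ (perturb_mem_Q hm hjk.symm htpos.le (by linarith) ht1)
        rw [gpert c m hjk t] at hp1
        rw [gpert c m hjk.symm t] at hp2
        nlinarith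
      -- move to a boundary
      set t : ℝ := min (v j - m j) (m k') with ht
      have htpos : 0 < t := lt_min (by linarith) h3
      set m' : Fin n → ℝ :=
        fun l => (m l + if l = j then t else 0) - if l = k' then t else 0 with hm'
      have hm'Q : m' ∈ Q v u0 :=
        perturb_mem_Q hm hjk htpos.le (by
          have : t ≤ v j - m j := min_le_left _ _
          linarith) (min_le_right _ _)
      have hopt' : ∀ e ∈ Q v u0, ∑ l, c l * e l ≤ ∑ l, c l * m' l := by
        intro e he
        rw [hm', gpert c m hjk t, hceq]
        have := hopt e he
        linarith
      have hcard' : (univ.filter (fun l => 0 < m' l ∧ m' l < v l)).card ≤ k := by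
        have hss : univ.filter (fun l => 0 < m' l ∧ m' l < v l)
            ⊂ univ.filter (fun l => 0 < m l ∧ m l < v l) := by
          constructor
          · intro l hl
            simp only [Finset.mem_filter, Finset.mem_univ, true_and] at hl ⊢
            by_cases hlj : l = j
            · subst hlj
              constructor
              · linarith
              · linarith
            · by_cases hlk : l = k'
              · subst hlk
                have hl' : m' l = m l - t := by
                  simp only [hm', if_neg hlj, eq_self_iff_true, if_true]; ring
                rw [hl'] at hl
                constructor
                · linarith [hl.1]
                · linarith [hl.2, htpos]
              · have hl' : m' l = m l := by
                  simp only [hm', if_neg hlj, if_neg hlk]; ring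
                rwa [hl'] at hl
          · intro hsup
            rcases min_cases (v j - m j) (m k') with ⟨hmin, -⟩ | ⟨hmin, -⟩
            · -- m' j = v j, so j left the set
              have hj' : m' j = v j := by
                simp only [hm', eq_self_iff_true, if_true, if_neg hjk]
                have htt : t = v j - m j := by rw [ht, hmin]
                linarith
              have hj_in : j ∈ univ.filter (fun l => 0 < m l ∧ m l < v l) := by
                simp [h1, h2]
              have := hsup hj_in
              simp only [Finset.mem_filter, Finset.mem_univ, true_and, hj'] at this
              exact lt_irrefl _ this.2
            · -- m' k' = 0
              have hk' : m' k' = 0 := by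
                simp only [hm', if_neg (Ne.symm hjk), eq_self_iff_true, if_true]
                have htt : t = m k' := by rw [ht, hmin]
                linarith
              have hk_in : k' ∈ univ.filter (fun l => 0 < m l ∧ m l < v l) := by
                simp [h3, h4]
              have := hsup hk_in
              simp only [Finset.mem_filter, Finset.mem_univ, true_and, hk'] at this
              exact lt_irrefl _ this.1
        have := Finset.card_lt_card hss
        omega
      exact ih m' hm'Q hopt' hcard'

lemma exists_opt_vertex (v : Fin n → ℝ) (hv : ∀ j, 0 < v j) {u0 : ℝ} (c : Fin n → ℝ)
    (h0 : 0 ≤ u0) (h1 : u0 ≤ ∑ j, v j) (hS : 0 < ∑ j, v j) :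
    ∃ f ∈ Q v u0, OF v f ∧ ∀ e ∈ Q v u0, ∑ j, c j * e j ≤ ∑ j, c j * f j := by
  obtain ⟨m, hmQ, hopt⟩ := (Q_isCompact v u0).exists_isMaxOn (Q_nonempty v hv h0 h1 hS)
    (Continuous.continuousOn (continuous_finset_sum _ fun j _ =>
      (continuous_const.mul (continuous_apply j))))
  exact frac_reduce v u0 c _ m hmQ (fun e he => hopt he) le_rfl

lemma opt_star (v : Fin n → ℝ) {u0 : ℝ} (c : Fin n → ℝ) {f : Fin n → ℝ}
    (hf : f ∈ Q v u0) (hopt : ∀ e ∈ Q v u0, ∑ j, c j * e j ≤ ∑ j, c j * f j)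
    {a b : Fin n} (ha : f a < v a) (hb : 0 < f b) : c a ≤ c b := by
  by_cases hab : a = b
  · subst hab; exact le_rfl
  · set t : ℝ := min (v a - f a) (f b) with ht
    have htpos : 0 < t := lt_min (by linarith) hb
    have ht1 : t ≤ v a - f a := min_le_left _ _
    have ht2 : t ≤ f b := min_le_right _ _
    have hp := hopt _ (perturb_mem_Q hf hab htpos.le (by linarith) ht2)
    rw [gpert c f hab t] at hp
    nlinarith

/-- one pivot move: move t units from coordinate `d0` to coordinate `r` -/
def piv (x : Fin n → ℝ) (r d0 : Fin n) (t : ℝ) : Fin n → ℝ :=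
  fun l => (x l + if l = r then t else 0) - if l = d0 then t else 0

lemma piv_r {x : Fin n → ℝ} {r d0 : Fin n} (hrd : r ≠ d0) (t : ℝ) :
    piv x r d0 t r = x r + t := by
  simp [piv, if_neg hrd]

lemma piv_d {x : Fin n → ℝ} {r d0 : Fin n} (hrd : r ≠ d0) (t : ℝ) :
    piv x r d0 t d0 = x d0 - t := by
  simp [piv, if_neg (Ne.symm hrd)]

lemma piv_other {x : Fin n → ℝ} {r d0 : Fin n} (t : ℝ) {j : Fin n}
    (hjr : j ≠ r) (hjd : j ≠ d0) : piv x r d0 t j = x j := by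
  simp [piv, if_neg hjr, if_neg hjd]

def Step (v : Fin n → ℝ) (u0 : ℝ) (c : Fin n → ℝ) (x y : Fin n → ℝ) : Prop :=
  x ∈ Q v u0 ∧ y ∈ Q v u0 ∧ OF v x ∧ OF v y ∧ x ≠ y ∧
  (∃ a b : Fin n, a ≠ b ∧ ∀ j, j ≠ a → j ≠ b → (y j = x j ∧ (x j = 0 ∨ x j = v j))) ∧
  ∑ j, c j * x j ≤ ∑ j, c j * y j

def Chain (v : Fin n → ℝ) (u0 : ℝ) (c f : Fin n → ℝ) (x : Fin n → ℝ) (k : ℕ) : Prop :=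
  ∃ w : ℕ → Fin n → ℝ, w 0 = x ∧ w k = f ∧ ∀ l, l < k → Step v u0 c (w l) (w (l + 1))

lemma chain_refl (v : Fin n → ℝ) (u0 : ℝ) (c f : Fin n → ℝ) : Chain v u0 c f f 0 :=
  ⟨fun _ => f, rfl, rfl, fun l hl => absurd hl (Nat.not_lt_zero l)⟩

lemma chain_cons {v : Fin n → ℝ} {u0 : ℝ} {c f x y : Fin n → ℝ} {k : ℕ}
    (hst : Step v u0 c x y) (hch : Chain v u0 c f y k) : Chain v u0 c f x (k + 1) := by
  obtain ⟨w, hw0, hwk, hws⟩ := hch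
  refine ⟨fun l => if l = 0 then x else w (l - 1), rfl, by simp [hwk], ?_⟩
  intro l hl
  by_cases hl0 : l = 0
  · subst hl0
    simpa [hw0] using hst
  · have h1 : l - 1 + 1 = l := Nat.succ_pred_eq_of_pos (Nat.pos_of_ne_zero hl0)
    simp only [if_neg hl0, if_neg (Nat.succ_ne_zero l)]
    have : l + 1 - 1 = (l - 1) + 1 := by omega
    rw [this]
    have h2 : l - 1 < k := by omega
    exact hws (l - 1) h2

open scoped Classical in
noncomputable def K (v f x : Fin n → ℝ) : Finset (Fin n) :=
  univ.filter (fun j => x j ≠ f j ∨ (0 < x j ∧ x j < v j))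

noncomputable def mu (v f x : Fin n → ℝ) : ℕ := (K v f x).card

lemma mem_K {v f x : Fin n → ℝ} {j : Fin n} :
    j ∈ K v f x ↔ (x j ≠ f j ∨ (0 < x j ∧ x j < v j)) := by
  classical
  simp [K]

lemma mu_le (v f x : Fin n → ℝ) : mu v f x ≤ n := by
  have := Finset.card_le_univ (K v f x)
  simpa [mu] using this

lemma mu_f_pos {v f : Fin n → ℝ} {p : Fin n} (hp : 0 < f p ∧ f p < v p) :
    1 ≤ mu v f f := by
  have : p ∈ K v f f := mem_K.2 (Or.inr hp)
  exact Finset.card_pos.2 ⟨p, this⟩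

lemma mu_eq_zero_imp {v f x : Fin n → ℝ} (h : mu v f x = 0) : x = f := by
  funext j
  by_contra hne
  have : j ∈ K v f x := mem_K.2 (Or.inl hne)
  rw [mu, Finset.card_eq_zero] at h
  rw [h] at this
  exact absurd this (Finset.notMem_empty j)

lemma K_subset {v f x y : Fin n → ℝ} {r d0 : Fin n}
    (hoffy : ∀ j, j ≠ r → j ≠ d0 → y j = x j)
    (hr : r ∈ K v f x) (hd : d0 ∈ K v f x) : K v f y ⊆ K v f x := by
  intro j hj
  by_cases hjr : j = r
  · subst hjr; exact hr
  · by_cases hjd : j = d0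
    · subst hjd; exact hd
    · rw [mem_K] at hj ⊢
      rwa [hoffy j hjr hjd] at hj

lemma mu_lt {v f x y : Fin n → ℝ} {q : Fin n} (hsub : K v f y ⊆ K v f x)
    (hq : q ∈ K v f x) (hqy : q ∉ K v f y) : mu v f y < mu v f x :=
  Finset.card_lt_card ⟨hsub, fun h => hqy (h hq)⟩

lemma sum_QQ {v : Fin n → ℝ} {u0 : ℝ} {x z : Fin n → ℝ} (hx : x ∈ Q v u0)
    (hz : z ∈ Q v u0) : ∑ j, (x j - z j) = 0 := by
  rw [Finset.sum_sub_distrib, hx.2, hz.2, sub_self]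

/-- mass balance: if x exceeds z everywhere off p, the excess at q is at most the
deficit at p. -/
lemma mass_single {v : Fin n → ℝ} {u0 : ℝ} {x z : Fin n → ℝ} (hx : x ∈ Q v u0)
    (hz : z ∈ Q v u0) {p : Fin n} (hall : ∀ j, j ≠ p → z j ≤ x j)
    {q : Fin n} (hqp : q ≠ p) : x q - z q ≤ z p - x p := by
  have h0 := sum_QQ hx hz
  have hsplit : ∑ j ∈ univ.erase p, (x j - z j) + (x p - z p) = 0 := by
    rw [Finset.sum_erase_add univ _ (mem_univ p)]; exact h0
  have hsingle : x q - z q ≤ ∑ j ∈ univ.erase p, (x j - z j) := by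
    apply Finset.single_le_sum (f := fun j => x j - z j)
    · intro j hj
      have := hall j (Finset.ne_of_mem_erase hj)
      linarith
    · exact Finset.mem_erase.2 ⟨hqp, mem_univ q⟩
  linarith

lemma under_over {v : Fin n → ℝ} {u0 : ℝ} {x f : Fin n → ℝ} (hx : x ∈ Q v u0)
    (hf : f ∈ Q v u0) (hne : x ≠ f) :
    (∃ a, x a < f a) ∧ (∃ b, f b < x b) := by
  constructor
  · by_contra h
    push_neg at h
    -- f j ≤ x j everywhere, sum 0 forces equality
    apply hne
    funext j
    have h0 := sum_QQ hx hf
    have : ∀ i ∈ univ, (0:ℝ) ≤ x i - f i := fun i _ => by linarith [h i]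
    have hz := (Finset.sum_eq_zero_iff_of_nonneg this).1 h0 j (mem_univ j)
    linarith
  · by_contra h
    push_neg at h
    apply hne
    funext j
    have h0 := sum_QQ hf hx
    have : ∀ i ∈ univ, (0:ℝ) ≤ f i - x i := fun i _ => by linarith [h i]
    have hz := (Finset.sum_eq_zero_iff_of_nonneg this).1 h0 j (mem_univ j)
    linarith

/-- the basic pivot step lemma -/
lemma pivot_step {v : Fin n → ℝ} {u0 : ℝ} {c : Fin n → ℝ} {x : Fin n → ℝ}
    (hx : x ∈ Q v u0) (hOFx : OF v x) {r d0 : Fin n} (hrd : r ≠ d0) {t : ℝ}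
    (ht : 0 < t) (h1 : x r + t ≤ v r) (h2 : t ≤ x d0)
    (hland : x r + t = v r ∨ x d0 = t)
    (hoffb : ∀ j, j ≠ r → j ≠ d0 → (x j = 0 ∨ x j = v j))
    (hc : c d0 ≤ c r) :
    Step v u0 c x (piv x r d0 t) := by
  have hyQ : piv x r d0 t ∈ Q v u0 := perturb_mem_Q hx hrd ht.le h1 h2
  have hyr : piv x r d0 t r = x r + t := piv_r hrd t
  have hyd : piv x r d0 t d0 = x d0 - t := piv_d hrd t
  refine ⟨hx, hyQ, hOFx, ?_, ?_, ⟨r, d0, hrd, ?_⟩, ?_⟩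
  · -- OF of result
    intro j k hjk hj1 hj2 hk1 hk2
    have hbnd : ∀ l, l ≠ r → l ≠ d0 → ¬(0 < piv x r d0 t l ∧ piv x r d0 t l < v l) := by
      intro l hlr hld hfr
      rw [piv_other t hlr hld] at hfr
      rcases hoffb l hlr hld with h | h
      · rw [h] at hfr; exact lt_irrefl _ hfr.1
      · rw [h] at hfr; exact lt_irrefl _ hfr.2
    have hjmem : j = r ∨ j = d0 := by
      by_contra hcon
      push_neg at hcon
      exact hbnd j hcon.1 hcon.2 ⟨hj1, hj2⟩
    have hkmem : k = r ∨ k = d0 := by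
      by_contra hcon
      push_neg at hcon
      exact hbnd k hcon.1 hcon.2 ⟨hk1, hk2⟩
    -- both r and d0 fractional in y, contradict hland
    have hfrac_r : 0 < piv x r d0 t r ∧ piv x r d0 t r < v r := by
      rcases hjmem with hh | hh
      · subst hh; exact ⟨hj1, hj2⟩
      · subst hh
        rcases hkmem with hh2 | hh2
        · subst hh2; exact ⟨hk1, hk2⟩
        · subst hh2; exact absurd rfl hjk
    have hfrac_d : 0 < piv x r d0 t d0 ∧ piv x r d0 t d0 < v d0 := by
      rcases hjmem with hh | hh
      · subst hh
        rcases hkmem with hh2 | hh2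
        · subst hh2; exact absurd rfl hjk
        · subst hh2; exact ⟨hk1, hk2⟩
      · subst hh; exact ⟨hj1, hj2⟩
    rcases hland with hl | hl
    · rw [hyr, hl] at hfrac_r
      exact lt_irrefl _ hfrac_r.2
    · rw [hyd, hl, sub_self] at hfrac_d
      exact lt_irrefl _ hfrac_d.1
  · -- x ≠ y
    intro heq
    have := congrFun heq r
    rw [hyr] at this
    linarith
  · intro j hjr hjd
    exact ⟨piv_other t hjr hjd, hoffb j hjr hjd⟩
  · -- objective increases
    have := gpert c x hrd t
    rw [show (∑ j, c j * piv x r d0 t j) = ∑ l,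
      c l * ((x l + if l = r then t else 0) - if l = d0 then t else 0) from rfl, this]
    nlinarith

lemma frac_of_ne {v : Fin n → ℝ} {u0 : ℝ} {x : Fin n → ℝ} (hx : x ∈ Q v u0)
    {j : Fin n} (h0 : x j ≠ 0) (h1 : x j ≠ v j) : 0 < x j ∧ x j < v j :=
  ⟨lt_of_le_of_ne (hx.1 j).1 (Ne.symm h0), lt_of_le_of_ne (hx.1 j).2 h1⟩

/-- the standard improving pivot: a is under-filled with target `v a`, b is
over-filled with target `0`; move as much as possible. -/
lemma Astep {v : Fin n → ℝ} {u0 : ℝ} {c f : Fin n → ℝ} (hv : ∀ j, 0 < v j)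
    (hopt : ∀ a b, f a < v a → 0 < f b → c a ≤ c b)
    {x : Fin n → ℝ} (hx : x ∈ Q v u0) (hOFx : OF v x)
    {a b : Fin n} (hab : a ≠ b) (haU : x a < f a) (hfa : f a = v a)
    (hbO : f b < x b) (hfb : f b = 0)
    (hoffb : ∀ j, j ≠ a → j ≠ b → (x j = 0 ∨ x j = v j)) :
    ∃ y, Step v u0 c x y ∧ mu v f y < mu v f x ∧ ∀ j, j ≠ a → j ≠ b → y j = x j := by
  set t : ℝ := min (v a - x a) (x b) with htdef
  have hxa : x a < v a := by rw [← hfa]; exact haU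
  have hxb : 0 < x b := by rw [← hfb]; exact hbO
  have ht : 0 < t := lt_min (by linarith) hxb
  have h1 : x a + t ≤ v a := by
    have := min_le_left (v a - x a) (x b); rw [← htdef] at this; linarith
  have h2 : t ≤ x b := min_le_right _ _
  have hland : x a + t = v a ∨ x b = t := by
    rcases le_total (v a - x a) (x b) with h | h
    · left; rw [htdef, min_eq_left h]; ring
    · right; rw [htdef, min_eq_right h]
  have hc : c b ≤ c a := hopt b a (by rw [hfb]; exact hv b) (by rw [hfa]; exact hv a)
  have hst := pivot_step hx hOFx hab ht h1 h2 hland hoffb hc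
  have haK : a ∈ K v f x := mem_K.2 (Or.inl (ne_of_lt haU))
  have hbK : b ∈ K v f x := mem_K.2 (Or.inl (ne_of_gt hbO))
  have hsub := K_subset (fun j hja hjb => piv_other (x := x) t hja hjb) haK hbK
  have hmul : mu v f (piv x a b t) < mu v f x := by
    rcases le_total (v a - x a) (x b) with h | h
    · have hya : piv x a b t a = f a := by
        rw [piv_r hab, htdef, min_eq_left h, hfa]; ring
      refine mu_lt hsub haK ?_
      intro hmem
      rcases mem_K.1 hmem with hh | hh
      · exact hh hya
      · rw [hya, hfa] at hh; exact lt_irrefl _ hh.2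
    · have hyb : piv x a b t b = f b := by
        rw [piv_d hab, htdef, min_eq_right h, hfb]; ring
      refine mu_lt hsub hbK ?_
      intro hmem
      rcases mem_K.1 hmem with hh | hh
      · exact hh hyb
      · rw [hyb, hfb] at hh; exact lt_irrefl _ hh.1
  exact ⟨piv x a b t, hst, hmul, fun j hja hjb => piv_other t hja hjb⟩

lemma benign_walk (v : Fin n → ℝ) (u0 : ℝ) (c f : Fin n → ℝ) (hv : ∀ j, 0 < v j)
    (hf : f ∈ Q v u0) (hOFf : OF v f)
    (hopt : ∀ a b, f a < v a → 0 < f b → c a ≤ c b) :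
    ∀ m : ℕ, ∀ x, x ∈ Q v u0 → OF v x →
      ((∀ j, x j < f j → (0 < f j ∧ f j < v j)) ∨
       (∀ j, f j < x j → (0 < f j ∧ f j < v j)) ∨
       (∃ p, (0 < f p ∧ f p < v p) ∧ (x p = 0 ∨ x p = v p))) →
      mu v f x ≤ m → ∃ k, k + mu v f f ≤ m ∧ Chain v u0 c f x k := by
  intro m
  induction m with
  | zero =>
    intro x hx hOFx hben hmu
    have hxf : x = f := mu_eq_zero_imp (Nat.le_zero.1 hmu)
    subst hxf
    exact ⟨0, by omega, chain_refl v u0 c x⟩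
  | succ m ih =>
    intro x hx hOFx hben hmu
    by_cases hxf : x = f
    · subst hxf
      exact ⟨0, by omega, chain_refl v u0 c x⟩
    obtain ⟨⟨a0, ha0⟩, ⟨b0, hb0⟩⟩ := under_over hx hf hxf
    by_cases hB : ∀ j, x j < f j → (0 < f j ∧ f j < v j)
    · -- B branch : all under-filled coordinates have fractional target
      have hfp : 0 < f a0 ∧ f a0 < v a0 := hB a0 ha0
      have hally : ∀ j, j ≠ a0 → f j ≤ x j := by
        intro j hj
        by_contra hcon
        push_neg at hcon
        have hfrj := hB j hcon
        have : j = a0 := by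
          by_contra hne
          exact hOFf j a0 hne hfrj.1 hfrj.2 hfp.1 hfp.2
        exact hj this
      have hq : ∃ q, q ≠ a0 ∧ f q < x q ∧ (∀ j, j ≠ a0 → j ≠ q → (x j = 0 ∨ x j = v j)) := by
        by_cases hFr2 : ∃ r, (0 < x r ∧ x r < v r) ∧ r ≠ a0
        · obtain ⟨r, hrfr, hrp⟩ := hFr2
          refine ⟨r, hrp, ?_, ?_⟩
          · rcases lt_trichotomy (x r) (f r) with h | h | h
            · have hfrr := hB r h
              exact (hOFf r a0 hrp hfrr.1 hfrr.2 hfp.1 hfp.2).elim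
            · exfalso
              rw [h] at hrfr
              exact hOFf r a0 hrp hrfr.1 hrfr.2 hfp.1 hfp.2
            · exact h
          · intro j hjp hjq
            by_contra hcon
            push_neg at hcon
            have hfrj := frac_of_ne hx hcon.1 hcon.2
            exact hOFx j r hjq hfrj.1 hfrj.2 hrfr.1 hrfr.2
        · push_neg at hFr2
          have hb0p : b0 ≠ a0 := by
            intro h
            rw [h] at hb0
            linarith
          refine ⟨b0, hb0p, hb0, ?_⟩
          intro j hjp hjq
          by_contra hcon
          push_neg at hcon
          exact hjp (hFr2 j (frac_of_ne hx hcon.1 hcon.2))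
      obtain ⟨q, hqp, hqO, hoffb⟩ := hq
      have hfq : f q = 0 := by
        by_contra hcon
        have h0 : 0 < f q := lt_of_le_of_ne (hf.1 q).1 (Ne.symm hcon)
        have h1 : f q < v q := lt_of_lt_of_le hqO (hx.1 q).2
        exact hOFf q a0 hqp h0 h1 hfp.1 hfp.2
      have hxq : 0 < x q := by rw [← hfq]; exact hqO
      have hmass : x q - f q ≤ f a0 - x a0 := mass_single hx hf hally hqp
      have h1 : x a0 + x q ≤ v a0 := by
        rw [hfq] at hmass
        linarith [(hf.1 a0).2]
      have hst := pivot_step hx hOFx (Ne.symm hqp) hxq h1 le_rfl (Or.inr rfl) hoffb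
        (hopt q a0 (by rw [hfq]; exact hv q) hfp.1)
      have hyq : piv x a0 q (x q) q = 0 := by rw [piv_d (Ne.symm hqp)]; ring
      have hqKx : q ∈ K v f x := mem_K.2 (Or.inl (ne_of_gt hqO))
      have hpKx : a0 ∈ K v f x := mem_K.2 (Or.inl (ne_of_lt ha0))
      have hqKy : q ∉ K v f (piv x a0 q (x q)) := by
        intro hmem
        rcases mem_K.1 hmem with hh | hh
        · exact hh (by rw [hyq, hfq])
        · rw [hyq] at hh; exact lt_irrefl _ hh.1
      have hsub : K v f (piv x a0 q (x q)) ⊆ K v f x :=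
        K_subset (fun j hja hjb => piv_other (x := x) (x q) hja hjb) hpKx hqKx
      have hmuy : mu v f (piv x a0 q (x q)) < mu v f x := mu_lt hsub hqKx hqKy
      have hben' : ∀ j, piv x a0 q (x q) j < f j → (0 < f j ∧ f j < v j) := by
        intro j hj
        by_cases hjp : j = a0
        · subst hjp; exact hfp
        · by_cases hjq : j = q
          · subst hjq
            rw [hyq] at hj
            rw [hfq] at hj
            exact absurd hj (lt_irrefl 0)
          · rw [piv_other _ hjp hjq] at hj
            exact hB j hj
      obtain ⟨k, hk, hch⟩ := ih (piv x a0 q (x q)) hst.2.1 hst.2.2.2.1 (Or.inl hben')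
        (by omega)
      exact ⟨k + 1, by omega, chain_cons hst hch⟩
    by_cases hB' : ∀ j, f j < x j → (0 < f j ∧ f j < v j)
    · -- B' branch : all over-filled coordinates have fractional target
      have hfp : 0 < f b0 ∧ f b0 < v b0 := hB' b0 hb0
      have hally : ∀ j, j ≠ b0 → x j ≤ f j := by
        intro j hj
        by_contra hcon
        push_neg at hcon
        have hfrj := hB' j hcon
        have : j = b0 := by
          by_contra hne
          exact hOFf j b0 hne hfrj.1 hfrj.2 hfp.1 hfp.2
        exact hj this
      have hq : ∃ q, q ≠ b0 ∧ x q < f q ∧ (∀ j, j ≠ q → j ≠ b0 → (x j = 0 ∨ x j = v j)) := by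
        by_cases hFr2 : ∃ r, (0 < x r ∧ x r < v r) ∧ r ≠ b0
        · obtain ⟨r, hrfr, hrp⟩ := hFr2
          refine ⟨r, hrp, ?_, ?_⟩
          · rcases lt_trichotomy (x r) (f r) with h | h | h
            · exact h
            · exfalso
              rw [h] at hrfr
              exact hOFf r b0 hrp hrfr.1 hrfr.2 hfp.1 hfp.2
            · have hfrr := hB' r h
              exact (hOFf r b0 hrp hfrr.1 hfrr.2 hfp.1 hfp.2).elim
          · intro j hjq hjp
            by_contra hcon
            push_neg at hcon
            have hfrj := frac_of_ne hx hcon.1 hcon.2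
            exact hOFx j r hjq hfrj.1 hfrj.2 hrfr.1 hrfr.2
        · push_neg at hFr2
          have ha0p : a0 ≠ b0 := by
            intro h
            rw [h] at ha0
            linarith
          refine ⟨a0, ha0p, ha0, ?_⟩
          intro j hjq hjp
          by_contra hcon
          push_neg at hcon
          exact hjp (hFr2 j (frac_of_ne hx hcon.1 hcon.2))
      obtain ⟨q, hqp, hqU, hoffb⟩ := hq
      have hfq : f q = v q := by
        by_contra hcon
        have h0 : 0 < f q := lt_of_le_of_lt (hx.1 q).1 hqU
        have h1 : f q < v q := lt_of_le_of_ne (hf.1 q).2 hcon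
        exact hOFf q b0 hqp h0 h1 hfp.1 hfp.2
      have hmass : f q - x q ≤ x b0 - f b0 := mass_single hf hx hally hqp
      have htpos : 0 < f q - x q := by linarith
      have h2 : f q - x q ≤ x b0 := by linarith [(hf.1 b0).1]
      have h1 : x q + (f q - x q) ≤ v q := by rw [hfq]; linarith
      have hland : x q + (f q - x q) = v q ∨ x b0 = f q - x q := Or.inl (by rw [hfq]; ring)
      have hst := pivot_step hx hOFx hqp htpos h1 h2 hland hoffb
        (hopt b0 q hfp.2 (by rw [hfq]; exact hv q))
      have hyq : piv x q b0 (f q - x q) q = f q := by rw [piv_r hqp]; ring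
      have hqKx : q ∈ K v f x := mem_K.2 (Or.inl (ne_of_lt hqU))
      have hpKx : b0 ∈ K v f x := mem_K.2 (Or.inl (ne_of_gt hb0))
      have hqKy : q ∉ K v f (piv x q b0 (f q - x q)) := by
        intro hmem
        rcases mem_K.1 hmem with hh | hh
        · exact hh hyq
        · rw [hyq, hfq] at hh; exact lt_irrefl _ hh.2
      have hsub : K v f (piv x q b0 (f q - x q)) ⊆ K v f x :=
        K_subset (fun j hja hjb => piv_other (x := x) (f q - x q) hja hjb) hqKx hpKx
      have hmuy : mu v f (piv x q b0 (f q - x q)) < mu v f x := mu_lt hsub hqKx hqKy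
      have hben' : ∀ j, f j < piv x q b0 (f q - x q) j → (0 < f j ∧ f j < v j) := by
        intro j hj
        by_cases hjq : j = q
        · subst hjq
          rw [hyq] at hj
          exact absurd hj (lt_irrefl _)
        · by_cases hjp : j = b0
          · subst hjp; exact hfp
          · rw [piv_other _ hjq hjp] at hj
            exact hB' j hj
      obtain ⟨k, hk, hch⟩ := ih (piv x q b0 (f q - x q)) hst.2.1 hst.2.2.2.1
        (Or.inr (Or.inl hben')) (by omega)
      exact ⟨k + 1, by omega, chain_cons hst hch⟩
    · -- PW branch
      rcases hben with h | h | hPW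
      · exact absurd h hB
      · exact absurd h hB'
      push_neg at hB hB'
      obtain ⟨a1, ha1U, ha1nf⟩ := hB
      obtain ⟨b1, hb1O, hb1nf⟩ := hB'
      have hfa1 : f a1 = v a1 :=
        le_antisymm (hf.1 a1).2 (ha1nf (lt_of_le_of_lt (hx.1 a1).1 ha1U))
      have hfb1 : f b1 = 0 := by
        rcases lt_or_eq_of_le (hf.1 b1).1 with h | h
        · exfalso
          have := hb1nf h
          have h2 : f b1 < v b1 := lt_of_lt_of_le hb1O (hx.1 b1).2
          linarith
        · exact h.symm
      obtain ⟨p, hfp, hxp⟩ := hPW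
      have hpa1 : a1 ≠ p := by
        intro h
        subst h
        have := ha1nf hfp.1
        linarith [hfp.2]
      have hpb1 : b1 ≠ p := by
        intro h
        subst h
        have := hb1nf hfp.1
        linarith [hfp.2]
      have hpair : ∃ a b, a ≠ b ∧ (x a < f a ∧ f a = v a) ∧ (f b < x b ∧ f b = 0) ∧
          (∀ j, j ≠ a → j ≠ b → (x j = 0 ∨ x j = v j)) ∧ a ≠ p ∧ b ≠ p := by
        by_cases hFr : ∃ r, 0 < x r ∧ x r < v r
        · obtain ⟨r, hr⟩ := hFr
          have hrp : r ≠ p := by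
            intro h
            subst h
            rcases hxp with h0 | h0 <;> rw [h0] at hr
            · exact lt_irrefl _ hr.1
            · exact lt_irrefl _ hr.2
          have hrnf : ¬(0 < f r ∧ f r < v r) :=
            fun hc => hOFf r p hrp hc.1 hc.2 hfp.1 hfp.2
          rcases lt_trichotomy (x r) (f r) with h | h | h
          · have hfr : f r = v r := by
              have h0 : 0 < f r := lt_of_le_of_lt (hx.1 r).1 h
              rcases lt_or_eq_of_le (hf.1 r).2 with hh | hh
              · exact absurd ⟨h0, hh⟩ hrnf
              · exact hh
            have hrb1 : r ≠ b1 := by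
              intro hh
              rw [hh, hfb1] at hfr
              linarith [hv b1]
            refine ⟨r, b1, hrb1, ⟨h, hfr⟩, ⟨hb1O, hfb1⟩, ?_, hrp, hpb1⟩
            intro j hjr hjb
            by_contra hcon
            push_neg at hcon
            have hfrj := frac_of_ne hx hcon.1 hcon.2
            exact hOFx j r hjr hfrj.1 hfrj.2 hr.1 hr.2
          · exfalso
            rw [h] at hr
            exact hrnf hr
          · have hfr : f r = 0 := by
              have h1 : f r < v r := lt_of_lt_of_le h (hx.1 r).2
              rcases lt_or_eq_of_le (hf.1 r).1 with hh | hh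
              · exact absurd ⟨hh, h1⟩ hrnf
              · exact hh.symm
            have hra1 : a1 ≠ r := by
              intro hh
              rw [hh, hfr] at hfa1
              linarith [hv r]
            refine ⟨a1, r, hra1, ⟨ha1U, hfa1⟩, ⟨h, hfr⟩, ?_, hpa1, hrp⟩
            intro j hja hjr
            by_contra hcon
            push_neg at hcon
            have hfrj := frac_of_ne hx hcon.1 hcon.2
            exact hOFx j r hjr hfrj.1 hfrj.2 hr.1 hr.2
        · push_neg at hFr
          have hab : a1 ≠ b1 := by
            intro h
            rw [h] at ha1U
            linarith
          refine ⟨a1, b1, hab, ⟨ha1U, hfa1⟩, ⟨hb1O, hfb1⟩, ?_, hpa1, hpb1⟩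
          intro j hja hjb
          rcases lt_or_eq_of_le (hx.1 j).1 with h0 | h0
          · exact Or.inr (le_antisymm (hx.1 j).2 (hFr j h0))
          · exact Or.inl h0.symm
      obtain ⟨a, b, hab, ⟨haU, hfa⟩, ⟨hbO, hfb⟩, hoffb, hap, hbp⟩ := hpair
      obtain ⟨y, hst, hmuy, hoffy⟩ := Astep hv hopt hx hOFx hab haU hfa hbO hfb hoffb
      have hben' : ∃ p', (0 < f p' ∧ f p' < v p') ∧ (y p' = 0 ∨ y p' = v p') := by
        refine ⟨p, hfp, ?_⟩
        rw [hoffy p (Ne.symm hap) (Ne.symm hbp)]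
        exact hxp
      obtain ⟨k, hk, hch⟩ := ih y hst.2.1 hst.2.2.2.1 (Or.inr (Or.inr hben')) (by omega)
      exact ⟨k + 1, by omega, chain_cons hst hch⟩

lemma main_walk (v : Fin n → ℝ) (u0 : ℝ) (c f : Fin n → ℝ) (hv : ∀ j, 0 < v j)
    (hf : f ∈ Q v u0) (hOFf : OF v f)
    (hopt : ∀ a b, f a < v a → 0 < f b → c a ≤ c b) :
    ∀ m : ℕ, ∀ x, x ∈ Q v u0 → OF v x → mu v f x ≤ m →
      ∃ k ≤ m, Chain v u0 c f x k := by
  intro m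
  induction m with
  | zero =>
    intro x hx hOFx hmu
    have hxf : x = f := mu_eq_zero_imp (Nat.le_zero.1 hmu)
    subst hxf
    exact ⟨0, le_rfl, chain_refl v u0 c x⟩
  | succ m ih =>
    intro x hx hOFx hmu
    by_cases hxf : x = f
    · subst hxf
      exact ⟨0, Nat.zero_le _, chain_refl v u0 c x⟩
    obtain ⟨⟨a0, ha0⟩, ⟨b0, hb0⟩⟩ := under_over hx hf hxf
    by_cases hB : ∀ j, x j < f j → (0 < f j ∧ f j < v j)
    · obtain ⟨k, hk, hch⟩ :=
        benign_walk v u0 c f hv hf hOFf hopt (m + 1) x hx hOFx (Or.inl hB) hmu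
      exact ⟨k, by omega, hch⟩
    by_cases hB' : ∀ j, f j < x j → (0 < f j ∧ f j < v j)
    · obtain ⟨k, hk, hch⟩ :=
        benign_walk v u0 c f hv hf hOFf hopt (m + 1) x hx hOFx (Or.inr (Or.inl hB')) hmu
      exact ⟨k, by omega, hch⟩
    push_neg at hB hB'
    obtain ⟨a1, ha1U, ha1nf⟩ := hB
    obtain ⟨b1, hb1O, hb1nf⟩ := hB'
    have hfa1 : f a1 = v a1 :=
      le_antisymm (hf.1 a1).2 (ha1nf (lt_of_le_of_lt (hx.1 a1).1 ha1U))
    have hfb1 : f b1 = 0 := by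
      rcases lt_or_eq_of_le (hf.1 b1).1 with h | h
      · exfalso
        have := hb1nf h
        have h2 : f b1 < v b1 := lt_of_lt_of_le hb1O (hx.1 b1).2
        linarith
      · exact h.symm
    by_cases hFr : ∃ r, 0 < x r ∧ x r < v r
    · obtain ⟨r, hr⟩ := hFr
      by_cases hfrf : 0 < f r ∧ f r < v r
      · -- the target has a fractional coordinate at the same place x is fractional
        have hra1 : a1 ≠ r := by
          intro h
          rw [h] at hfa1
          linarith [hfrf.2, ha1nf]
        have hxa1 : x a1 = 0 := by
          rcases lt_or_eq_of_le (hx.1 a1).1 with h0 | h0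
          · exfalso
            have h1 : x a1 < v a1 := by rw [← hfa1]; exact lt_of_lt_of_le ha1U (le_of_eq rfl)
            exact hOFx a1 r hra1 h0 h1 hr.1 hr.2
          · exact h0.symm
        have hoffb : ∀ j, j ≠ a1 → j ≠ r → (x j = 0 ∨ x j = v j) := by
          intro j hja hjr
          by_contra hcon
          push_neg at hcon
          have hfrj := frac_of_ne hx hcon.1 hcon.2
          exact hOFx j r hjr hfrj.1 hfrj.2 hr.1 hr.2
        have hc : c r ≤ c a1 := hopt r a1 hfrf.2 (by rw [hfa1]; exact hv a1)
        by_cases hva : v a1 ≤ x r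
        · -- drain r, finalizing a1
          have hst := pivot_step hx hOFx hra1 ?_ ?_ hva (Or.inl ?_) hoffb hc
          rotate_left
          · rw [← hfa1]; linarith [lt_of_le_of_lt (hx.1 a1).1 ha1U, (hf.1 a1).1, ha1U, hxa1]
          · rw [hxa1]; linarith [hfa1]
          · rw [hxa1, zero_add]
          have hya : piv x a1 r (v a1) a1 = f a1 := by
            rw [piv_r hra1, hxa1, hfa1, zero_add]
          have haK : a1 ∈ K v f x := mem_K.2 (Or.inl (ne_of_lt ha1U))
          have hrK : r ∈ K v f x := mem_K.2 (Or.inr hr)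
          have haKy : a1 ∉ K v f (piv x a1 r (v a1)) := by
            intro hmem
            rcases mem_K.1 hmem with hh | hh
            · exact hh hya
            · rw [hya, hfa1] at hh
              exact lt_irrefl _ hh.2
          have hsub : K v f (piv x a1 r (v a1)) ⊆ K v f x :=
            K_subset (fun j hja hjr => piv_other (x := x) (v a1) hja hjr) haK hrK
          have hmuy : mu v f (piv x a1 r (v a1)) < mu v f x := mu_lt hsub haK haKy
          obtain ⟨k, hk, hch⟩ := ih (piv x a1 r (v a1)) hst.2.1 hst.2.2.2.1 (by omega)
          exact ⟨k + 1, by omega, chain_cons hst hch⟩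
        · -- waste step: drain r to 0 into a1, then the benign walk takes over
          push_neg at hva
          have hst := pivot_step hx hOFx hra1 hr.1 ?_ le_rfl (Or.inr rfl) hoffb hc
          rotate_left
          · rw [hxa1, zero_add]; exact hva.le
          have hyr : piv x a1 r (x r) r = 0 := by rw [piv_d hra1]; ring
          have haK : a1 ∈ K v f x := mem_K.2 (Or.inl (ne_of_lt ha1U))
          have hrK : r ∈ K v f x := mem_K.2 (Or.inr hr)
          have hsub : K v f (piv x a1 r (x r)) ⊆ K v f x :=
            K_subset (fun j hja hjr => piv_other (x := x) (x r) hja hjr) haK hrK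
          have hmuy : mu v f (piv x a1 r (x r)) ≤ mu v f x := Finset.card_le_card hsub
          have hben' : ∃ p, (0 < f p ∧ f p < v p) ∧
              (piv x a1 r (x r) p = 0 ∨ piv x a1 r (x r) p = v p) :=
            ⟨r, hfrf, Or.inl hyr⟩
          obtain ⟨k, hk, hch⟩ := benign_walk v u0 c f hv hf hOFf hopt (m + 1)
            (piv x a1 r (x r)) hst.2.1 hst.2.2.2.1 (Or.inr (Or.inr hben')) (by omega)
          have hmuf : 1 ≤ mu v f f := mu_f_pos hfrf
          exact ⟨k + 1, by omega, chain_cons hst hch⟩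
      · -- x fractional at r but target is at a bound there
        have hrfne : x r ≠ f r := by
          intro h
          rw [h] at hr
          exact hfrf hr
        rcases lt_or_gt_of_ne hrfne with h | h
        · -- r is under-filled, f r = v r : improve pair (r, b1)
          have hfr : f r = v r := by
            have h0 : 0 < f r := lt_of_le_of_lt (hx.1 r).1 h
            rcases lt_or_eq_of_le (hf.1 r).2 with hh | hh
            · exact absurd ⟨h0, hh⟩ hfrf
            · exact hh
          have hrb1 : r ≠ b1 := by
            intro hh
            rw [hh, hfb1] at hfr
            linarith [hv b1]
          have hoffb : ∀ j, j ≠ r → j ≠ b1 → (x j = 0 ∨ x j = v j) := by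
            intro j hjr hjb
            by_contra hcon
            push_neg at hcon
            have hfrj := frac_of_ne hx hcon.1 hcon.2
            exact hOFx j r hjr hfrj.1 hfrj.2 hr.1 hr.2
          obtain ⟨y, hst, hmuy, -⟩ := Astep hv hopt hx hOFx hrb1 h hfr hb1O hfb1 hoffb
          obtain ⟨k, hk, hch⟩ := ih y hst.2.1 hst.2.2.2.1 (by omega)
          exact ⟨k + 1, by omega, chain_cons hst hch⟩
        · -- r is over-filled, f r = 0 : improve pair (a1, r)
          have hfr : f r = 0 := by
            have h1 : f r < v r := lt_of_lt_of_le h (hx.1 r).2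
            rcases lt_or_eq_of_le (hf.1 r).1 with hh | hh
            · exact absurd ⟨hh, h1⟩ hfrf
            · exact hh.symm
          have hra1 : a1 ≠ r := by
            intro hh
            rw [hh, hfr] at hfa1
            linarith [hv r]
          have hoffb : ∀ j, j ≠ a1 → j ≠ r → (x j = 0 ∨ x j = v j) := by
            intro j hja hjr
            by_contra hcon
            push_neg at hcon
            have hfrj := frac_of_ne hx hcon.1 hcon.2
            exact hOFx j r hjr hfrj.1 hfrj.2 hr.1 hr.2
          obtain ⟨y, hst, hmuy, -⟩ := Astep hv hopt hx hOFx hra1 ha1U hfa1 h hfr hoffb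
          obtain ⟨k, hk, hch⟩ := ih y hst.2.1 hst.2.2.2.1 (by omega)
          exact ⟨k + 1, by omega, chain_cons hst hch⟩
    · -- no fractional coordinate in x at all : improve pair (a1, b1)
      push_neg at hFr
      have hab : a1 ≠ b1 := by
        intro h
        rw [h] at ha1U
        linarith
      have hoffb : ∀ j, j ≠ a1 → j ≠ b1 → (x j = 0 ∨ x j = v j) := by
        intro j hja hjb
        rcases lt_or_eq_of_le (hx.1 j).1 with h0 | h0
        · exact Or.inr (le_antisymm (hx.1 j).2 (hFr j h0))
        · exact Or.inl h0.symm
      obtain ⟨y, hst, hmuy, -⟩ := Astep hv hopt hx hOFx hab ha1U hfa1 hb1O hfb1 hoffb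
      obtain ⟨k, hk, hch⟩ := ih y hst.2.1 hst.2.2.2.1 (by omega)
      exact ⟨k + 1, by omega, chain_cons hst hch⟩

end Stmt15

/-- monotone Hirsch for 2×n transportation polytopes with bound n: from any
vertex O there is a monotone edge walk of length at most n to some vertex F maximizing
the linear functional given by s. -/
theorem stmt_15 (n : ℕ) (hn : 0 < n) (u : Fin 2 → ℝ) (v : Fin n → ℝ)
    (hu : ∀ i, 0 < u i) (hv : ∀ j, 0 < v j) (huv : ∑ i, u i = ∑ j, v j)
    (s : Matrix (Fin 2) (Fin n) ℝ)
    (O : Matrix (Fin 2) (Fin n) ℝ)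
    (hO : O ∈ Set.extremePoints ℝ (TP 2 n u v)) :
    ∃ F : Matrix (Fin 2) (Fin n) ℝ,
      F ∈ Set.extremePoints ℝ (TP 2 n u v) ∧
      (∀ y ∈ TP 2 n u v, ∑ i, ∑ j, s i j * y i j ≤ ∑ i, ∑ j, s i j * F i j) ∧
      ∃ k ≤ n, ∃ w : ℕ → Matrix (Fin 2) (Fin n) ℝ,
        w 0 = O ∧ w k = F ∧
        (∀ l < k, AdjVert 2 n u v (w l) (w (l + 1))) ∧
        (∀ l < k, ∑ i, ∑ j, s i j * w l i j ≤ ∑ i, ∑ j, s i j * w (l + 1) i j) := by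
  classical
  have huv2 : u 0 + u 1 = ∑ j, v j := by rw [← huv, Fin.sum_univ_two]
  have hS : 0 < ∑ j, v j := by rw [← huv2]; linarith [hu 0, hu 1]
  have h0 : (0:ℝ) ≤ u 0 := (hu 0).le
  have h1 : u 0 ≤ ∑ j, v j := by rw [← huv2]; linarith [hu 1]
  obtain ⟨f, hfQ, hOFf, hfopt⟩ :=
    Stmt15.exists_opt_vertex v hv (fun j => s 0 j - s 1 j) h0 h1 hS
  have hstar : ∀ a b, f a < v a → 0 < f b →
      (fun j => s 0 j - s 1 j) a ≤ (fun j => s 0 j - s 1 j) b :=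
    fun a b ha hb => Stmt15.opt_star v (fun j => s 0 j - s 1 j) hfQ hfopt ha hb
  obtain ⟨hOTP, hOOF⟩ := (Stmt15.extreme_iff u v huv O).1 hO
  obtain ⟨hOQ, hOM⟩ := (Stmt15.mem_TP_iff u v huv O).1 hOTP
  obtain ⟨k, hkle, w, hw0, hwk, hws⟩ :=
    Stmt15.main_walk v (u 0) (fun j => s 0 j - s 1 j) f hv hfQ hOFf hstar
      (Stmt15.mu v f (fun j => O 0 j)) (fun j => O 0 j) hOQ hOOF le_rfl
  refine ⟨Stmt15.M v f, ?_, ?_, k, le_trans hkle (Stmt15.mu_le v f _), (fun l => Stmt15.M v (w l)),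
    ?_, ?_, ?_, ?_⟩
  · refine (Stmt15.extreme_iff u v huv (Stmt15.M v f)).2 ⟨Stmt15.M_mem_TP u v huv hfQ, ?_⟩
    exact hOFf
  · intro y hy
    obtain ⟨hyQ, hyM⟩ := (Stmt15.mem_TP_iff u v huv y).1 hy
    rw [hyM, Stmt15.obj_M, Stmt15.obj_M]
    exact add_le_add_left (hfopt (fun j => y 0 j) hyQ) _
  · show Stmt15.M v (w 0) = O
    rw [hw0]
    exact hOM.symm
  · show Stmt15.M v (w k) = Stmt15.M v f
    rw [hwk]
  · intro l hl
    obtain ⟨hxQ, hyQ, hOX, hOY, hne, ⟨a, b, hab, hoff⟩, hmono⟩ := hws l hl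
    exact Stmt15.adj_lemma u v huv hxQ hyQ hOX hOY hab hoff hne
  · intro l hl
    obtain ⟨hxQ, hyQ, hOX, hOY, hne, ⟨a, b, hab, hoff⟩, hmono⟩ := hws l hl
    show ∑ i, ∑ j, s i j * Stmt15.M v (w l) i j ≤ ∑ i, ∑ j, s i j * Stmt15.M v (w (l + 1)) i j
    rw [Stmt15.obj_M, Stmt15.obj_M]
    exact add_le_add_left hmono _
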